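/- arXiv:1802.08623 — 3 statements merged into one kernel-verified Lean document; each statement's English description precedes it below -/
import Mathlib

section
/- For every Hurst parameter H with 0 < H < 1, the function (r,s) ↦ e^{-r} e^{-s} (r^{2H} + s^{2H} - |r-s|^{2H})/2 is integrable on (0,∞) × (0,∞), and its integral C_H = ∫_0^∞ ∫_0^∞ e^{-r} e^{-s} (r^{2H} + s^{2H} - |r-s|^{2H})/2 dr ds is a strictly positive real number. -/
open MeasureTheory Set Real

lemma aux_lt {H a b : ℝ} (hH : 0 < H) (ha : 0 < a) (hb : 0 < b) :
    |a - b| ^ (2 * H) < a ^ (2 * H) + b ^ (2 * H) := by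
  have h2H : 0 < 2 * H := by linarith
  rcases le_total b a with h | h
  · have habs : |a - b| = a - b := abs_of_nonneg (by linarith)
    have h1 : |a - b| ^ (2 * H) < a ^ (2 * H) :=
      Real.rpow_lt_rpow (abs_nonneg _) (by rw [habs]; linarith) h2H
    have h2 : 0 < b ^ (2 * H) := Real.rpow_pos_of_pos hb _
    linarith
  · have habs : |a - b| = b - a := abs_of_nonpos (by linarith) |>.trans (by ring)
    have h1 : |a - b| ^ (2 * H) < b ^ (2 * H) :=
      Real.rpow_lt_rpow (abs_nonneg _) (by rw [habs]; linarith) h2H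
    have h2 : 0 < a ^ (2 * H) := Real.rpow_pos_of_pos ha _
    linarith

theorem statement_0 (H : ℝ) (hH0 : 0 < H) (hH1 : H < 1) :
    IntegrableOn
      (fun p : ℝ × ℝ =>
        Real.exp (-p.1) * Real.exp (-p.2) *
          (p.1 ^ (2 * H) + p.2 ^ (2 * H) - |p.1 - p.2| ^ (2 * H)) / 2)
      (Set.Ioi (0 : ℝ) ×ˢ Set.Ioi (0 : ℝ)) volume ∧
    0 < ∫ p in Set.Ioi (0 : ℝ) ×ˢ Set.Ioi (0 : ℝ),
          Real.exp (-p.1) * Real.exp (-p.2) *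
            (p.1 ^ (2 * H) + p.2 ^ (2 * H) - |p.1 - p.2| ^ (2 * H)) / 2 := by
  have h2H : 0 < 2 * H := by linarith
  set f : ℝ × ℝ → ℝ := fun p =>
      Real.exp (-p.1) * Real.exp (-p.2) *
        (p.1 ^ (2 * H) + p.2 ^ (2 * H) - |p.1 - p.2| ^ (2 * H)) / 2 with hf
  have hmeasS : MeasurableSet (Set.Ioi (0:ℝ) ×ˢ Set.Ioi (0:ℝ)) :=
    measurableSet_Ioi.prod measurableSet_Ioi
  -- integrability of one-dimensional pieces
  have hg : IntegrableOn (fun x : ℝ => Real.exp (-x) * x ^ (2 * H)) (Set.Ioi 0) volume := by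
    have := Real.GammaIntegral_convergent (s := 2 * H + 1) (by linarith)
    simpa using this
  have he : IntegrableOn (fun x : ℝ => Real.exp (-x)) (Set.Ioi 0) volume := by
    have := Real.GammaIntegral_convergent (s := 1) one_pos
    simpa using this
  -- the dominating function
  set G : ℝ × ℝ → ℝ := fun p =>
      (Real.exp (-p.1) * p.1 ^ (2 * H)) * Real.exp (-p.2) +
        Real.exp (-p.1) * (Real.exp (-p.2) * p.2 ^ (2 * H)) with hG
  have hGint : IntegrableOn G (Set.Ioi (0:ℝ) ×ˢ Set.Ioi (0:ℝ)) volume := by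
    rw [IntegrableOn, Measure.volume_eq_prod, ← Measure.prod_restrict]
    exact (hg.mul_prod he).add (he.mul_prod hg)
  have hfmeas : AEStronglyMeasurable f
      (volume.restrict (Set.Ioi (0:ℝ) ×ˢ Set.Ioi (0:ℝ))) := by
    apply Measurable.aestronglyMeasurable
    fun_prop
  have hpos : ∀ p : ℝ × ℝ, p ∈ Set.Ioi (0:ℝ) ×ˢ Set.Ioi (0:ℝ) → 0 < f p := by
    rintro ⟨a, b⟩ ⟨ha, hb⟩
    have h := aux_lt hH0 (mem_Ioi.mp ha) (mem_Ioi.mp hb)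
    have e1 : 0 < Real.exp (-a) * Real.exp (-b) :=
      mul_pos (Real.exp_pos _) (Real.exp_pos _)
    simp only [hf]
    have h' : 0 < a ^ (2 * H) + b ^ (2 * H) - |a - b| ^ (2 * H) := by linarith
    positivity
  have hbound : ∀ᵐ p ∂(volume.restrict (Set.Ioi (0:ℝ) ×ˢ Set.Ioi (0:ℝ))), ‖f p‖ ≤ G p := by
    rw [ae_restrict_iff' hmeasS]
    filter_upwards with p hp
    obtain ⟨a, b⟩ := p
    obtain ⟨ha, hb⟩ := hp
    have ha' := le_of_lt (mem_Ioi.mp ha)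
    have hb' := le_of_lt (mem_Ioi.mp hb)
    have h := (aux_lt hH0 (mem_Ioi.mp ha) (mem_Ioi.mp hb)).le
    have habs : 0 ≤ |a - b| ^ (2 * H) := Real.rpow_nonneg (abs_nonneg _) _
    have e1 : 0 < Real.exp (-a) * Real.exp (-b) :=
      mul_pos (Real.exp_pos _) (Real.exp_pos _)
    have hfnn : 0 ≤ f (a, b) := (hpos (a, b) ⟨ha, hb⟩).le
    rw [Real.norm_eq_abs, abs_of_nonneg hfnn]
    simp only [hf, hG]
    have key : Real.exp (-a) * Real.exp (-b) *
        (a ^ (2 * H) + b ^ (2 * H) - |a - b| ^ (2 * H)) ≤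
        Real.exp (-a) * Real.exp (-b) * (a ^ (2 * H) + b ^ (2 * H)) := by
      apply mul_le_mul_of_nonneg_left _ e1.le
      linarith
    calc Real.exp (-a) * Real.exp (-b) *
          (a ^ (2 * H) + b ^ (2 * H) - |a - b| ^ (2 * H)) / 2
        ≤ Real.exp (-a) * Real.exp (-b) * (a ^ (2 * H) + b ^ (2 * H)) / 2 := by linarith
      _ ≤ Real.exp (-a) * a ^ (2 * H) * Real.exp (-b) +
            Real.exp (-a) * (Real.exp (-b) * b ^ (2 * H)) := by
          have h1 : 0 ≤ a ^ (2 * H) := Real.rpow_nonneg ha' _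
          have h2 : 0 ≤ b ^ (2 * H) := Real.rpow_nonneg hb' _
          nlinarith [e1]
  have hint : IntegrableOn f (Set.Ioi (0:ℝ) ×ˢ Set.Ioi (0:ℝ)) volume :=
    hGint.mono' hfmeas hbound
  refine ⟨hint, ?_⟩
  have hnn : 0 ≤ᵐ[volume.restrict (Set.Ioi (0:ℝ) ×ˢ Set.Ioi (0:ℝ))] f := by
    refine (ae_restrict_iff' hmeasS).2 ?_
    filter_upwards with p hp
    exact (hpos p hp).le
  rw [setIntegral_pos_iff_support_of_nonneg_ae hnn hint]
  have hsub : Set.Ioo (0:ℝ) 1 ×ˢ Set.Ioo (0:ℝ) 1 ⊆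
      Function.support f ∩ Set.Ioi (0:ℝ) ×ˢ Set.Ioi (0:ℝ) := by
    rintro ⟨a, b⟩ ⟨ha, hb⟩
    have hmem : (a, b) ∈ Set.Ioi (0:ℝ) ×ˢ Set.Ioi (0:ℝ) := ⟨ha.1, hb.1⟩
    exact ⟨(hpos (a, b) hmem).ne', hmem⟩
  calc (0:ENNReal) < volume (Set.Ioo (0:ℝ) 1 ×ˢ Set.Ioo (0:ℝ) 1) := by
        rw [Measure.volume_eq_prod, Measure.prod_prod, Real.volume_Ioo]
        norm_num
    _ ≤ _ := measure_mono hsub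
end

section
/- Let H > 1/4 be a real number. For every k ∈ ℤ²₀, the function h ↦ 1/(|h|^{4H} |k-h|^{4H}) is summable over h ∈ ℤ² \ {0, k}; that is, the series ∑_{h ∈ ℤ²₀, h ≠ k} 1/(|h|^{4H} |k-h|^{4H}) converges. -/
/-- Euclidean norm of an element of `ℤ²`. -/
noncomputable def znorm (k : ℤ × ℤ) : ℝ :=
  Real.sqrt ((k.1 : ℝ) ^ 2 + (k.2 : ℝ) ^ 2)

lemma znorm_nonneg (h : ℤ × ℤ) : 0 ≤ znorm h := Real.sqrt_nonneg _

lemma znorm_pos {h : ℤ × ℤ} (hh : h ≠ 0) : 0 < znorm h := by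
  apply Real.sqrt_pos.2
  have h1 : (h.1 : ℝ)^2 ≥ 0 := sq_nonneg _
  have h2 : (h.2 : ℝ)^2 ≥ 0 := sq_nonneg _
  rcases eq_or_ne h.1 0 with e1 | e1
  · rcases eq_or_ne h.2 0 with e2 | e2
    · exact absurd (Prod.ext e1 e2) hh
    · have : (h.2:ℝ) ≠ 0 := Int.cast_ne_zero.2 e2
      nlinarith [pow_pos (abs_pos.2 this) 2, sq_abs (h.2:ℝ)]
  · have : (h.1:ℝ) ≠ 0 := Int.cast_ne_zero.2 e1
    nlinarith [pow_pos (abs_pos.2 this) 2, sq_abs (h.1:ℝ)]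

lemma norm_le_znorm (h : ℤ × ℤ) : ‖(finTwoArrowEquiv ℤ).symm h‖ ≤ znorm h := by
  rw [EisensteinSeries.norm_eq_max_natAbs]
  simp only [finTwoArrowEquiv_symm_apply, Matrix.cons_val_zero, Matrix.cons_val_one,
    Matrix.head_cons]
  rw [znorm, Real.le_sqrt (by positivity) (by positivity)]
  rcases le_total (h.1.natAbs) (h.2.natAbs) with hle | hle
  · rw [max_eq_right hle]
    have : ((h.2.natAbs : ℝ))^2 = (h.2:ℝ)^2 := by
      rw [Nat.cast_natAbs]; push_cast; rw [sq_abs]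
    nlinarith [sq_nonneg (h.1:ℝ)]
  · rw [max_eq_left hle]
    have : ((h.1.natAbs : ℝ))^2 = (h.1:ℝ)^2 := by
      rw [Nat.cast_natAbs]; push_cast; rw [sq_abs]
    nlinarith [sq_nonneg (h.2:ℝ)]

lemma summable_znorm_rpow {p : ℝ} (hp : 2 < p) :
    Summable fun h : ℤ × ℤ => znorm h ^ (-p) := by
  have base := EisensteinSeries.summable_one_div_norm_rpow hp
  have base2 : Summable fun h : ℤ × ℤ => ‖(finTwoArrowEquiv ℤ).symm h‖ ^ (-p) :=
    ((finTwoArrowEquiv ℤ).symm.summable_iff.2 base : _)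
  refine base2.of_nonneg_of_le (fun h => Real.rpow_nonneg (znorm_nonneg h) _) (fun h => ?_)
  rcases eq_or_ne h 0 with rfl | hh
  · simp only [znorm, Prod.fst_zero, Prod.snd_zero, Int.cast_zero]
    norm_num
    rw [Real.zero_rpow (by linarith : -p ≠ 0)]
    exact Real.rpow_nonneg (norm_nonneg _) _
  · have h1 : (0:ℝ) < ‖(finTwoArrowEquiv ℤ).symm h‖ := by
      have e0 : (finTwoArrowEquiv ℤ).symm (0 : ℤ×ℤ) = 0 := by
        funext i; fin_cases i <;> simp
      rw [norm_pos_iff]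
      intro e
      exact hh ((finTwoArrowEquiv ℤ).symm.injective (e.trans e0.symm))
    exact Real.rpow_le_rpow_of_nonpos h1 (norm_le_znorm h) (by linarith)

theorem statement_1 (H : ℝ) (hH : 1 / 4 < H) (k : ℤ × ℤ) (hk : k ≠ 0) :
    Summable (fun h : {h : ℤ × ℤ // h ≠ 0 ∧ h ≠ k} =>
      1 / (znorm h.1 ^ (4 * H) * znorm (k - h.1) ^ (4 * H))) := by
  have hp : (2:ℝ) < 8 * H := by linarith
  have S1 : Summable fun h : ℤ × ℤ => znorm h ^ (-(8*H)) := summable_znorm_rpow hp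
  have S2 : Summable fun h : ℤ × ℤ => znorm (k - h) ^ (-(8*H)) := by
    have := S1.comp_injective (Equiv.subLeft k).injective
    simpa [Equiv.subLeft, Function.comp_def] using this
  have Sg : Summable (fun h : {h : ℤ × ℤ // h ≠ 0 ∧ h ≠ k} =>
      (1/2) * (znorm h.1 ^ (-(8*H)) + znorm (k - h.1) ^ (-(8*H)))) :=
    (((S1.comp_injective Subtype.val_injective).add
      (S2.comp_injective Subtype.val_injective)).mul_left _)
  refine Sg.of_nonneg_of_le (fun h => one_div_nonneg.2 (mul_nonneg (Real.rpow_nonneg (znorm_nonneg _) _)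
    (Real.rpow_nonneg (znorm_nonneg _) _))) (fun h => ?_)
  obtain ⟨h, hh0, hhk⟩ := h
  have hkh : k - h ≠ 0 := sub_ne_zero.2 (Ne.symm hhk)
  have A := znorm_pos hh0
  have B := znorm_pos hkh
  have hA : znorm h ^ (4*H) > 0 := Real.rpow_pos_of_pos A _
  have hB : znorm (k-h) ^ (4*H) > 0 := Real.rpow_pos_of_pos B _
  have e1 : znorm h ^ (-(8*H)) = (znorm h ^ (4*H))⁻¹ ^ 2 := by
    rw [← Real.rpow_natCast ((znorm h ^ (4*H))⁻¹) 2, ← Real.rpow_neg_one (znorm h ^ (4*H)),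
      ← Real.rpow_mul A.le, ← Real.rpow_mul A.le]
    norm_num; ring_nf
  have e2 : znorm (k-h) ^ (-(8*H)) = (znorm (k-h) ^ (4*H))⁻¹ ^ 2 := by
    rw [← Real.rpow_natCast ((znorm (k-h) ^ (4*H))⁻¹) 2, ← Real.rpow_neg_one,
      ← Real.rpow_mul B.le, ← Real.rpow_mul B.le]
    norm_num; ring_nf
  rw [e1, e2, one_div, mul_inv]
  nlinarith [sq_nonneg ((znorm h ^ (4*H))⁻¹ - (znorm (k-h) ^ (4*H))⁻¹)]
end

section
/- Let 1/4 < H < 1/2. There exists a constant M_H > 0 such that for every k ∈ ℤ²₀, ∑_{h ∈ ℤ²₀, h ≠ k} 1/(|h|^{4H} |k-h|^{4H}) ≤ M_H / |k|^{8H-2}. -/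
namespace Stmt2
open Finset Real

def mnorm (k : ℤ × ℤ) : ℕ := max k.1.natAbs k.2.natAbs

lemma znorm_nonneg (k : ℤ × ℤ) : 0 ≤ znorm k := Real.sqrt_nonneg _

lemma znorm_eq (k : ℤ × ℤ) : znorm k = ‖(⟨(k.1 : ℝ), (k.2 : ℝ)⟩ : ℂ)‖ := by
  rw [Complex.norm_def, Complex.normSq_mk, znorm]; ring_nf

lemma znorm_triangle (k h : ℤ × ℤ) : znorm k ≤ znorm h + znorm (k - h) := by
  rw [znorm_eq, znorm_eq, znorm_eq]
  have e : (⟨(k.1 : ℝ), (k.2 : ℝ)⟩ : ℂ)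
      = ⟨(h.1 : ℝ), (h.2 : ℝ)⟩ + ⟨((k - h).1 : ℝ), ((k - h).2 : ℝ)⟩ := by
    apply Complex.ext <;> simp [Prod.fst_sub, Prod.snd_sub] <;> push_cast <;> ring
  rw [e]; exact norm_add_le _ _

lemma mnorm_le_znorm (k : ℤ × ℤ) : (mnorm k : ℝ) ≤ znorm k := by
  rw [znorm]
  rcases max_cases k.1.natAbs k.2.natAbs with ⟨h1, _⟩ | ⟨h1, _⟩ <;> rw [mnorm, h1]
  · rw [show ((k.1.natAbs : ℝ)) = Real.sqrt ((k.1:ℝ)^2) by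
      rw [Real.sqrt_sq_eq_abs]; push_cast [Nat.cast_natAbs]; ring_nf]
    exact Real.sqrt_le_sqrt (by nlinarith [sq_nonneg ((k.2:ℝ))])
  · rw [show ((k.2.natAbs : ℝ)) = Real.sqrt ((k.2:ℝ)^2) by
      rw [Real.sqrt_sq_eq_abs]; push_cast [Nat.cast_natAbs]; ring_nf]
    exact Real.sqrt_le_sqrt (by nlinarith [sq_nonneg ((k.1:ℝ))])

lemma znorm_le_two_mnorm (k : ℤ × ℤ) : znorm k ≤ 2 * (mnorm k : ℝ) := by
  rw [znorm]
  have h1 : |(k.1 : ℝ)| ≤ (mnorm k : ℝ) := by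
    rw [mnorm]; push_cast [Nat.cast_natAbs]
    exact le_max_left _ _
  have h2 : |(k.2 : ℝ)| ≤ (mnorm k : ℝ) := by
    rw [mnorm]; push_cast [Nat.cast_natAbs]
    exact le_max_right _ _
  have := Real.sqrt_le_sqrt (show (k.1:ℝ)^2 + (k.2:ℝ)^2 ≤ (2*(mnorm k:ℝ))^2 by
    nlinarith [abs_nonneg (k.1:ℝ), abs_nonneg (k.2:ℝ), sq_abs (k.1:ℝ), sq_abs (k.2:ℝ)])
  rwa [Real.sqrt_sq (by positivity)] at this

lemma one_le_mnorm {k : ℤ × ℤ} (hk : k ≠ 0) : 1 ≤ mnorm k := by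
  rcases k with ⟨a, b⟩
  simp only [mnorm, Nat.one_le_iff_ne_zero]
  have : a ≠ 0 ∨ b ≠ 0 := by
    by_contra h; push_neg at h; exact hk (by simp [Prod.ext_iff, h.1, h.2])
  omega

lemma one_le_znorm {k : ℤ × ℤ} (hk : k ≠ 0) : 1 ≤ znorm k := by
  calc (1:ℝ) ≤ (mnorm k : ℝ) := by exact_mod_cast one_le_mnorm hk
  _ ≤ znorm k := mnorm_le_znorm k



noncomputable def B (n : ℕ) : Finset (ℤ × ℤ) := Finset.Icc (-(n : ℤ)) n ×ˢ Finset.Icc (-(n : ℤ)) n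

lemma mem_B {h : ℤ × ℤ} {n : ℕ} : h ∈ B n ↔ mnorm h ≤ n := by
  simp only [B, Finset.mem_product, Finset.mem_Icc, mnorm, max_le_iff]
  omega

lemma B_mono {m n : ℕ} (h : m ≤ n) : B m ⊆ B n := fun x hx => by
  rw [mem_B] at *; omega

lemma card_B (n : ℕ) : (B n).card = (2 * n + 1) ^ 2 := by
  rw [B, Finset.card_product, Int.card_Icc]
  have : ((n : ℤ) + 1 - -(n : ℤ)).toNat = 2 * n + 1 := by omega
  rw [this, sq]

lemma shell_sum (f : ℕ → ℝ) (N₀ : ℕ) :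
    ∀ N, ∑ h ∈ B N \ B N₀, f (mnorm h) = ∑ n ∈ Finset.Ioc N₀ N, (8 * n : ℝ) * f n := by
  intro N
  induction N with
  | zero =>
      rw [Finset.sdiff_eq_empty_iff_subset.2 (B_mono (Nat.zero_le _)),
        Finset.Ioc_eq_empty (by omega)]
      simp
  | succ N ih =>
      rcases le_or_gt (N + 1) N₀ with hle | hlt
      · rw [Finset.sdiff_eq_empty_iff_subset.2 (B_mono hle), Finset.Ioc_eq_empty (by omega)]
        simp
      · have hN₀ : N₀ ≤ N := by omega
        have hsplit : B (N + 1) \ B N₀ = (B (N + 1) \ B N) ∪ (B N \ B N₀) := by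
          ext x
          simp only [Finset.mem_sdiff, Finset.mem_union, mem_B]
          omega
        have hdisj : Disjoint (B (N + 1) \ B N) (B N \ B N₀) := by
          rw [Finset.disjoint_left]
          intro x hx hx'
          simp only [Finset.mem_sdiff, mem_B] at hx hx'
          omega
        rw [hsplit, Finset.sum_union hdisj, ih, Finset.sum_Ioc_succ_top hN₀]
        have hconst : ∑ h ∈ B (N + 1) \ B N, f (mnorm h)
            = ((B (N + 1) \ B N).card : ℝ) * f (N + 1) := by
          rw [Finset.sum_congr rfl (fun x hx => by
            simp only [Finset.mem_sdiff, mem_B] at hx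
            rw [show mnorm x = N + 1 by omega]), Finset.sum_const, nsmul_eq_mul]
        have hcard : (B (N + 1) \ B N).card = 8 * (N + 1) := by
          rw [Finset.card_sdiff_of_subset (B_mono (by omega)), card_B, card_B]
          ring_nf
          omega
        rw [hconst, hcard]
        push_cast
        ring


lemma bern {a : ℝ} (ha : 0 < a) (ha1 : a ≤ 1) {x : ℝ} (hx : 1 ≤ x) :
    (x - 1) ^ a ≤ x ^ a - a * x ^ (a - 1) := by
  have hx0 : (0 : ℝ) < x := lt_of_lt_of_le one_pos hx
  have hs : -1 ≤ -1 / x := by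
    rw [neg_div, neg_le_neg_iff]
    exact div_le_one_of_le₀ hx hx0.le
  have hber := rpow_one_add_le_one_add_mul_self hs ha.le ha1
  have h1 : (1 : ℝ) + -1 / x = (x - 1) / x := by field_simp; ring
  rw [h1] at hber
  have h2 : ((x - 1) / x) ^ a = (x - 1) ^ a / x ^ a :=
    Real.div_rpow (by linarith) hx0.le a
  rw [h2, div_le_iff₀ (Real.rpow_pos_of_pos hx0 a)] at hber
  calc (x - 1) ^ a ≤ (1 + a * (-1 / x)) * x ^ a := hber
    _ = x ^ a - a * (x ^ a / x) := by ring
    _ = x ^ a - a * x ^ (a - 1) := by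
        rw [← Real.rpow_sub_one hx0.ne' a]

lemma bern2 {e : ℝ} (he : 0 < e) (he1 : e ≤ 1) {x : ℝ} (hx : 2 ≤ x) :
    x ^ (-e) + e * x ^ (-e - 1) ≤ (x - 1) ^ (-e) := by
  have hx0 : (0 : ℝ) < x := by linarith
  have hx1 : (0 : ℝ) < x - 1 := by linarith
  have hb := bern he he1 (show (1:ℝ) ≤ x by linarith)
  have hu : 0 < 1 - e / x := by
    have : e / x < 1 := by
      rw [div_lt_one hx0]; linarith
    linarith
  have hxa : (0:ℝ) < x ^ e := Real.rpow_pos_of_pos hx0 e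
  have hb' : (x - 1) ^ e ≤ x ^ e * (1 - e / x) := by
    have : x ^ e * (1 - e/x) = x ^ e - e * x ^ (e - 1) := by
      rw [mul_sub, mul_one, mul_div_assoc', mul_comm (x ^ e) e, mul_div_assoc,
        ← Real.rpow_sub_one hx0.ne' e]
    linarith [hb, this.ge]
  -- (x-1)^(-e) = 1/(x-1)^e ≥ 1/(x^e (1-e/x)) ≥ (1+e/x)/x^e
  have key : (1 + e / x) / x ^ e ≤ 1 / (x - 1) ^ e := by
    rw [div_le_div_iff₀ (by positivity) (Real.rpow_pos_of_pos hx1 e)]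
    calc (1 + e / x) * (x - 1) ^ e ≤ (1 + e / x) * (x ^ e * (1 - e / x)) := by
          apply mul_le_mul_of_nonneg_left hb' (by positivity)
      _ = x ^ e * (1 - (e/x)^2) := by ring
      _ ≤ 1 * x ^ e := by
          rw [one_mul]
          nlinarith [sq_nonneg (e/x), hxa]
  have h1 : (1 + e / x) / x ^ e = x ^ (-e) + e * x ^ (-e - 1) := by
    rw [Real.rpow_neg hx0.le, show -e - 1 = -(e+1) by ring, Real.rpow_neg hx0.le,
      Real.rpow_add hx0 e 1, Real.rpow_one]
    field_simp [hx0.ne', hxa.ne']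
  have h2 : (1:ℝ) / (x - 1) ^ e = (x - 1) ^ (-e) := by
    rw [Real.rpow_neg hx1.le, one_div]
  rw [h1, h2] at key
  exact key

lemma sum_L1 {a : ℝ} (ha : 0 < a) (ha1 : a < 1) :
    ∀ N : ℕ, ∑ n ∈ Finset.Ioc 0 N, ((n : ℝ)) ^ (a - 1) ≤ (1 / a) * (N : ℝ) ^ a := by
  intro N
  induction N with
  | zero => simp [Real.zero_rpow ha.ne']
  | succ N ih =>
      rw [Finset.sum_Ioc_succ_top (Nat.zero_le _)]
      have hx : (1:ℝ) ≤ ((N:ℝ) + 1) := by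
        have := Nat.cast_nonneg (α := ℝ) N; linarith
      have hb := bern ha ha1.le hx
      have hcast : ((N + 1 : ℕ) : ℝ) = (N : ℝ) + 1 := by push_cast; ring
      have hb2 : ((N:ℝ)) ^ a ≤ ((N:ℝ)+1) ^ a - a * ((N:ℝ)+1) ^ (a - 1) := by
        have he : ((N:ℝ) + 1 - 1) = (N:ℝ) := by ring
        rwa [he] at hb
      have hstep : ((N + 1 : ℕ) : ℝ) ^ (a - 1) ≤ (1/a) * (((N:ℝ)+1) ^ a - (N:ℝ) ^ a) := by
        rw [hcast, show (1/a) * (((N:ℝ)+1) ^ a - (N:ℝ) ^ a)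
          = ((((N:ℝ)+1) ^ a - (N:ℝ) ^ a)) / a by ring, le_div_iff₀ ha]
        nlinarith [hb2]
      calc _ ≤ (1/a) * (N:ℝ) ^ a + (1/a) * (((N:ℝ)+1) ^ a - (N:ℝ) ^ a) := by linarith
        _ = (1/a) * (((N:ℝ)+1)) ^ a := by ring
        _ = (1/a) * ((N+1 : ℕ) : ℝ) ^ a := by rw [hcast]

lemma sum_L2 {e : ℝ} (he : 0 < e) (he1 : e < 1) (m : ℕ) :
    ∀ M : ℕ, ∑ n ∈ Finset.Ioc m M, ((n : ℝ)) ^ (-1 - e) ≤ (1 + 1 / e) * ((m : ℝ) + 1) ^ (-e) := by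
  have hm1 : (0:ℝ) < (m:ℝ) + 1 := by positivity
  have key : ∀ j : ℕ, ∑ n ∈ Finset.Ioc m (m + 1 + j), ((n : ℝ)) ^ (-1 - e)
      ≤ ((m:ℝ) + 1) ^ (-1 - e) + (1/e) * (((m:ℝ)+1) ^ (-e) - ((m + 1 + j : ℕ) : ℝ) ^ (-e)) := by
    intro j
    induction j with
    | zero =>
        rw [show m + 1 + 0 = m + 1 by ring, Finset.sum_Ioc_succ_top (by omega),
          Finset.Ioc_self, Finset.sum_empty, zero_add]
        push_cast
        simp
    | succ j ih =>
        rw [show m + 1 + (j + 1) = (m + 1 + j) + 1 by ring,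
          Finset.sum_Ioc_succ_top (by omega)]
        have hx : (2:ℝ) ≤ ((m + 1 + j : ℕ) : ℝ) + 1 := by
          push_cast; linarith [Nat.cast_nonneg (α := ℝ) m, Nat.cast_nonneg (α := ℝ) j]
        have hb := bern2 he he1.le hx
        have hsub : ((m + 1 + j : ℕ) : ℝ) + 1 - 1 = ((m + 1 + j : ℕ) : ℝ) := by ring
        rw [hsub] at hb
        have hcast2 : (((m + 1 + j) + 1 : ℕ) : ℝ) = ((m + 1 + j : ℕ) : ℝ) + 1 := by push_cast; ring
        have hterm : (((m + 1 + j) + 1 : ℕ) : ℝ) ^ (-1 - e)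
            ≤ (1/e) * (((m + 1 + j : ℕ) : ℝ) ^ (-e) - ((((m + 1 + j) + 1 : ℕ)) : ℝ) ^ (-e)) := by
          rw [hcast2, show (1/e) * (((m + 1 + j : ℕ) : ℝ) ^ (-e) - (((m + 1 + j : ℕ) : ℝ) + 1) ^ (-e))
            = ((((m + 1 + j : ℕ) : ℝ)) ^ (-e) - (((m + 1 + j : ℕ) : ℝ) + 1) ^ (-e)) / e by ring,
            le_div_iff₀ he, show -1 - e = -e - 1 by ring]
          nlinarith [hb]
        calc _ ≤ (((m:ℝ) + 1) ^ (-1 - e) + (1/e) * (((m:ℝ)+1) ^ (-e) - ((m + 1 + j : ℕ) : ℝ) ^ (-e)))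
              + (1/e) * (((m + 1 + j : ℕ) : ℝ) ^ (-e) - ((((m + 1 + j) + 1 : ℕ)) : ℝ) ^ (-e)) := by
              exact add_le_add ih hterm
          _ = ((m:ℝ) + 1) ^ (-1 - e) + (1/e) * (((m:ℝ)+1) ^ (-e) - (((m + 1 + j + 1 : ℕ)) : ℝ) ^ (-e)) := by
              ring
  intro M
  rcases le_or_gt M m with hMm | hmM
  · rw [Finset.Ioc_eq_empty (by omega), Finset.sum_empty]
    positivity
  · obtain ⟨j, rfl⟩ : ∃ j, M = m + 1 + j := ⟨M - (m+1), by omega⟩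
    calc ∑ n ∈ Finset.Ioc m (m + 1 + j), ((n : ℝ)) ^ (-1 - e)
        ≤ ((m:ℝ) + 1) ^ (-1 - e) + (1/e) * (((m:ℝ)+1) ^ (-e) - ((m + 1 + j : ℕ) : ℝ) ^ (-e)) := key j
      _ ≤ ((m:ℝ) + 1) ^ (-e) + (1/e) * ((m:ℝ)+1) ^ (-e) := by
          have h1 : ((m:ℝ) + 1) ^ (-1 - e) ≤ ((m:ℝ) + 1) ^ (-e) :=
            Real.rpow_le_rpow_of_exponent_le (by linarith [Nat.cast_nonneg (α := ℝ) m]) (by linarith)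
          have h2 : (0:ℝ) ≤ ((m + 1 + j : ℕ) : ℝ) ^ (-e) := Real.rpow_nonneg (by positivity) _
          have h3 : (0:ℝ) < 1/e := by positivity
          nlinarith [h2, h3]
      _ = (1 + 1 / e) * ((m : ℝ) + 1) ^ (-e) := by ring
lemma partA {p : ℝ} (hp1 : 1 < p) (hp2 : p < 2) {k : ℤ × ℤ} (hk : k ≠ 0)
    (t : Finset (ℤ × ℤ))
    (ht : ∀ h ∈ t, h ≠ 0 ∧ znorm h ≤ znorm (k - h) ∧ znorm h ≤ znorm k) :
    ∑ h ∈ t, 1 / (znorm h ^ p * znorm (k - h) ^ p)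
      ≤ 2 ^ p * (8 / (2 - p)) * znorm k ^ (2 - 2 * p) := by
  set R := znorm k with hR
  have hR1 : 1 ≤ R := one_le_znorm hk
  have hR0 : 0 < R := lt_of_lt_of_le one_pos hR1
  set N : ℕ := ⌊R⌋₊ with hN
  -- pointwise bound
  have hpt : ∀ h ∈ t, 1 / (znorm h ^ p * znorm (k - h) ^ p)
      ≤ (2 / R) ^ p * ((mnorm h : ℝ)) ^ (-p) := by
    intro h hh
    obtain ⟨h0, hle, hkR⟩ := ht h hh
    have hm1 : (1 : ℝ) ≤ (mnorm h : ℝ) := by exact_mod_cast one_le_mnorm h0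
    have hmz : (mnorm h : ℝ) ≤ znorm h := mnorm_le_znorm h
    have hz0 : 0 < znorm h := lt_of_lt_of_le one_pos (le_trans hm1 hmz)
    have hB : R / 2 ≤ znorm (k - h) := by
      have := znorm_triangle k h
      linarith
    have hBpos : (0 : ℝ) < R / 2 := by linarith
    have hprod : (mnorm h : ℝ) ^ p * (R / 2) ^ p ≤ znorm h ^ p * znorm (k - h) ^ p := by
      apply mul_le_mul (Real.rpow_le_rpow (by positivity) hmz (by linarith))
        (Real.rpow_le_rpow hBpos.le hB (by linarith))
        (Real.rpow_nonneg hBpos.le p) (Real.rpow_nonneg hz0.le p)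
    have hpos : (0 : ℝ) < (mnorm h : ℝ) ^ p * (R / 2) ^ p := by positivity
    calc 1 / (znorm h ^ p * znorm (k - h) ^ p)
        ≤ 1 / ((mnorm h : ℝ) ^ p * (R / 2) ^ p) := one_div_le_one_div_of_le hpos hprod
      _ = (2 / R) ^ p * ((mnorm h : ℝ)) ^ (-p) := by
          rw [Real.rpow_neg (by positivity), Real.div_rpow (by norm_num) hR0.le,
            Real.div_rpow hR0.le (by norm_num)]
          have h2p : (0:ℝ) < (2:ℝ) ^ p := by positivity
          have hRp : (0:ℝ) < R ^ p := by positivity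
          have hmp : (0:ℝ) < (mnorm h : ℝ) ^ p := by positivity
          field_simp
  have hsub : t ⊆ B N \ B 0 := by
    intro h hh
    obtain ⟨h0, hle, hkR⟩ := ht h hh
    rw [Finset.mem_sdiff, mem_B, mem_B]
    constructor
    · exact Nat.le_floor (le_trans (mnorm_le_znorm h) hkR)
    · have := one_le_mnorm h0; omega
  calc ∑ h ∈ t, 1 / (znorm h ^ p * znorm (k - h) ^ p)
      ≤ ∑ h ∈ t, (2 / R) ^ p * ((mnorm h : ℝ)) ^ (-p) := Finset.sum_le_sum hpt
    _ = (2 / R) ^ p * ∑ h ∈ t, ((mnorm h : ℝ)) ^ (-p) := by rw [Finset.mul_sum]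
    _ ≤ (2 / R) ^ p * ∑ h ∈ B N \ B 0, ((mnorm h : ℝ)) ^ (-p) := by
        apply mul_le_mul_of_nonneg_left _ (by positivity)
        exact Finset.sum_le_sum_of_subset_of_nonneg hsub
          (fun i _ _ => Real.rpow_nonneg (by positivity) _)
    _ = (2 / R) ^ p * ∑ n ∈ Finset.Ioc 0 N, (8 * n : ℝ) * ((n : ℝ)) ^ (-p) := by
        rw [shell_sum (fun n => ((n : ℝ)) ^ (-p)) 0 N]
    _ = (2 / R) ^ p * (8 * ∑ n ∈ Finset.Ioc 0 N, ((n : ℝ)) ^ ((2 - p) - 1)) := by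
        congr 1
        rw [Finset.mul_sum]
        apply Finset.sum_congr rfl
        intro n hn
        rw [Finset.mem_Ioc] at hn
        have hn0 : (0:ℝ) < (n:ℝ) := by exact_mod_cast hn.1
        rw [show ((2:ℝ) - p) - 1 = 1 + -p by ring, Real.rpow_add hn0, Real.rpow_one]
        ring
    _ ≤ (2 / R) ^ p * (8 * ((1 / (2 - p)) * (N : ℝ) ^ (2 - p))) := by
        apply mul_le_mul_of_nonneg_left _ (by positivity)
        apply mul_le_mul_of_nonneg_left (sum_L1 (by linarith) (by linarith) N) (by norm_num)
    _ ≤ (2 / R) ^ p * (8 * ((1 / (2 - p)) * R ^ (2 - p))) := by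
        apply mul_le_mul_of_nonneg_left _ (by positivity)
        apply mul_le_mul_of_nonneg_left _ (by norm_num)
        apply mul_le_mul_of_nonneg_left _ (one_div_nonneg.2 (by linarith))
        exact Real.rpow_le_rpow (by positivity) (Nat.floor_le hR0.le) (by linarith)
    _ = 2 ^ p * (8 / (2 - p)) * znorm k ^ (2 - 2 * p) := by
        rw [Real.div_rpow (by norm_num) hR0.le, ← hR]
        rw [show (2:ℝ) - 2 * p = (2 - p) + -p by ring, Real.rpow_add hR0, Real.rpow_neg hR0.le]
        have hRp : (0:ℝ) < R ^ p := by positivity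
        field_simp
lemma partB {p : ℝ} (hp1 : 1 < p) (hp2 : p < 2) {k : ℤ × ℤ} (hk : k ≠ 0)
    (t : Finset (ℤ × ℤ))
    (ht : ∀ h ∈ t, h ≠ 0 ∧ znorm h ≤ znorm (k - h) ∧ znorm k < znorm h) :
    ∑ h ∈ t, 1 / (znorm h ^ p * znorm (k - h) ^ p)
      ≤ 8 * 4 ^ (p - 1) * (1 + 1 / (p - 1)) * znorm k ^ (2 - 2 * p) := by
  set e := p - 1 with he
  have he0 : 0 < e := by rw [he]; linarith
  have he1 : e < 1 := by rw [he]; linarith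
  set R := znorm k with hR
  have hR1 : 1 ≤ R := one_le_znorm hk
  have hR0 : 0 < R := lt_of_lt_of_le one_pos hR1
  set N' : ℕ := ⌊R / 2⌋₊ with hN'
  set Mx : ℕ := t.sup mnorm with hMx
  -- pointwise bound
  have hpt : ∀ h ∈ t, 1 / (znorm h ^ p * znorm (k - h) ^ p)
      ≤ (2 / R) ^ e * ((mnorm h : ℝ)) ^ (-2 - e) := by
    intro h hh
    obtain ⟨h0, hle, hRz⟩ := ht h hh
    have hm1 : (1 : ℝ) ≤ (mnorm h : ℝ) := by exact_mod_cast one_le_mnorm h0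
    have hmz : (mnorm h : ℝ) ≤ znorm h := mnorm_le_znorm h
    have hz2m : znorm h ≤ 2 * (mnorm h : ℝ) := znorm_le_two_mnorm h
    have hz0 : 0 < znorm h := lt_of_lt_of_le one_pos (le_trans hm1 hmz)
    have hm0 : (0:ℝ) < (mnorm h : ℝ) := lt_of_lt_of_le one_pos hm1
    have hmR : R / 2 < (mnorm h : ℝ) := by linarith
    have hprod : (mnorm h : ℝ) ^ (2 + e) * (R / 2) ^ e ≤ znorm h ^ p * znorm (k - h) ^ p := by
      have h1 : (mnorm h : ℝ) ^ p * (mnorm h : ℝ) ^ p ≤ znorm h ^ p * znorm (k - h) ^ p := by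
        apply mul_le_mul (Real.rpow_le_rpow hm0.le hmz (by linarith))
          (Real.rpow_le_rpow hm0.le (le_trans hmz hle) (by linarith))
          (Real.rpow_nonneg hm0.le p) (Real.rpow_nonneg hz0.le p)
      have h2 : (mnorm h : ℝ) ^ (2 + e) * (R / 2) ^ e
          ≤ (mnorm h : ℝ) ^ (2 + e) * (mnorm h : ℝ) ^ e := by
        apply mul_le_mul_of_nonneg_left (Real.rpow_le_rpow (by positivity) hmR.le he0.le)
          (Real.rpow_nonneg hm0.le _)
      have h3 : (mnorm h : ℝ) ^ (2 + e) * (mnorm h : ℝ) ^ e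
          = (mnorm h : ℝ) ^ p * (mnorm h : ℝ) ^ p := by
        rw [← Real.rpow_add hm0, ← Real.rpow_add hm0]
        congr 1
        rw [he]; ring
      linarith [h2, h3 ▸ h2]
    have hpos : (0 : ℝ) < (mnorm h : ℝ) ^ (2 + e) * (R / 2) ^ e := by positivity
    calc 1 / (znorm h ^ p * znorm (k - h) ^ p)
        ≤ 1 / ((mnorm h : ℝ) ^ (2 + e) * (R / 2) ^ e) := one_div_le_one_div_of_le hpos hprod
      _ = (2 / R) ^ e * ((mnorm h : ℝ)) ^ (-2 - e) := by
          rw [show -2 - e = -(2 + e) by ring, Real.rpow_neg hm0.le,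
            Real.div_rpow (by norm_num) hR0.le, Real.div_rpow hR0.le (by norm_num)]
          have h2p : (0:ℝ) < (2:ℝ) ^ e := by positivity
          have hRp : (0:ℝ) < R ^ e := by positivity
          have hmp : (0:ℝ) < (mnorm h : ℝ) ^ (2 + e) := by positivity
          field_simp
  have hsub : t ⊆ B Mx \ B N' := by
    intro h hh
    obtain ⟨h0, hle, hRz⟩ := ht h hh
    rw [Finset.mem_sdiff, mem_B, mem_B]
    constructor
    · exact Finset.le_sup hh
    · have hfl : (N' : ℝ) ≤ R / 2 := Nat.floor_le (by positivity)
      have hmz : (mnorm h : ℝ) ≤ znorm h := mnorm_le_znorm h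
      have hz2m : znorm h ≤ 2 * (mnorm h : ℝ) := znorm_le_two_mnorm h
      have : (N' : ℝ) < (mnorm h : ℝ) := by linarith
      have := Nat.cast_lt.mp this
      omega
  calc ∑ h ∈ t, 1 / (znorm h ^ p * znorm (k - h) ^ p)
      ≤ ∑ h ∈ t, (2 / R) ^ e * ((mnorm h : ℝ)) ^ (-2 - e) := Finset.sum_le_sum hpt
    _ = (2 / R) ^ e * ∑ h ∈ t, ((mnorm h : ℝ)) ^ (-2 - e) := by rw [Finset.mul_sum]
    _ ≤ (2 / R) ^ e * ∑ h ∈ B Mx \ B N', ((mnorm h : ℝ)) ^ (-2 - e) := by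
        apply mul_le_mul_of_nonneg_left _ (by positivity)
        exact Finset.sum_le_sum_of_subset_of_nonneg hsub
          (fun i _ _ => Real.rpow_nonneg (by positivity) _)
    _ = (2 / R) ^ e * ∑ n ∈ Finset.Ioc N' Mx, (8 * n : ℝ) * ((n : ℝ)) ^ (-2 - e) := by
        rw [shell_sum (fun n => ((n : ℝ)) ^ (-2 - e)) N' Mx]
    _ = (2 / R) ^ e * (8 * ∑ n ∈ Finset.Ioc N' Mx, ((n : ℝ)) ^ (-1 - e)) := by
        congr 1
        rw [Finset.mul_sum]
        apply Finset.sum_congr rfl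
        intro n hn
        rw [Finset.mem_Ioc] at hn
        have hn0 : (0:ℝ) < (n:ℝ) := by
          have : 0 < n := by omega
          exact_mod_cast this
        rw [show (-1:ℝ) - e = 1 + (-2 - e) by ring, Real.rpow_add hn0, Real.rpow_one]
        ring
    _ ≤ (2 / R) ^ e * (8 * ((1 + 1 / e) * ((N' : ℝ) + 1) ^ (-e))) := by
        apply mul_le_mul_of_nonneg_left _ (by positivity)
        apply mul_le_mul_of_nonneg_left (sum_L2 he0 he1 N' Mx) (by norm_num)
    _ ≤ (2 / R) ^ e * (8 * ((1 + 1 / e) * (R / 2) ^ (-e))) := by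
        apply mul_le_mul_of_nonneg_left _ (by positivity)
        apply mul_le_mul_of_nonneg_left _ (by norm_num)
        apply mul_le_mul_of_nonneg_left _ (by positivity)
        apply Real.rpow_le_rpow_of_nonpos (by positivity) _ (by linarith)
        have := Nat.lt_floor_add_one (R / 2)
        push_cast
        linarith
    _ = 8 * 4 ^ (p - 1) * (1 + 1 / (p - 1)) * znorm k ^ (2 - 2 * p) := by
        rw [← he, ← hR]
        have hinv : (R / 2) ^ (-e) = (2 / R) ^ e := by
          rw [Real.rpow_neg (by positivity), ← Real.inv_rpow (by positivity), inv_div]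
        rw [hinv, Real.div_rpow (by norm_num) hR0.le,
          show (4:ℝ) = 2 * 2 by norm_num,
          Real.mul_rpow (by norm_num) (by norm_num),
          show (2:ℝ) - 2 * p = -(e + e) by rw [he]; ring,
          Real.rpow_neg hR0.le, Real.rpow_add hR0]
        have h2p : (0:ℝ) < (2:ℝ) ^ e := by positivity
        have hRp : (0:ℝ) < R ^ e := by positivity
        field_simp
lemma key {p : ℝ} (hp1 : 1 < p) (hp2 : p < 2) {k : ℤ × ℤ} (hk : k ≠ 0)
    (s : Finset (ℤ × ℤ)) (hs : ∀ h ∈ s, h ≠ 0 ∧ h ≠ k ∧ znorm h ≤ znorm (k - h)) :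
    ∑ h ∈ s, 1 / (znorm h ^ p * znorm (k - h) ^ p)
      ≤ (2 ^ p * (8 / (2 - p)) + 8 * 4 ^ (p - 1) * (1 + 1 / (p - 1)))
          * znorm k ^ (2 - 2 * p) := by
  rw [← Finset.sum_filter_add_sum_filter_not s (fun h => znorm h ≤ znorm k), add_mul]
  apply add_le_add
  · apply partA hp1 hp2 hk
    intro h hh
    rw [Finset.mem_filter] at hh
    obtain ⟨h0, _, hle⟩ := hs h hh.1
    exact ⟨h0, hle, hh.2⟩
  · apply partB hp1 hp2 hk
    intro h hh
    rw [Finset.mem_filter] at hh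
    obtain ⟨h0, _, hle⟩ := hs h hh.1
    exact ⟨h0, hle, lt_of_not_ge hh.2⟩

end Stmt2

theorem statement_2 (H : ℝ) (hH1 : 1 / 4 < H) (hH2 : H < 1 / 2) :
    ∃ M : ℝ, 0 < M ∧ ∀ k : ℤ × ℤ, k ≠ 0 →
      (∑' h : {h : ℤ × ℤ // h ≠ 0 ∧ h ≠ k},
          1 / (znorm h.1 ^ (4 * H) * znorm (k - h.1) ^ (4 * H)))
        ≤ M / znorm k ^ (8 * H - 2) := by
  have hp1 : 1 < 4 * H := by linarith
  have hp2 : 4 * H < 2 := by linarith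
  set C : ℝ := 2 ^ (4 * H) * (8 / (2 - 4 * H)) + 8 * 4 ^ (4 * H - 1) * (1 + 1 / (4 * H - 1))
    with hC
  have hCpos : 0 < C := by
    have h1 : (0:ℝ) < 2 ^ (4 * H) := Real.rpow_pos_of_pos (by norm_num) _
    have h2 : (0:ℝ) < 8 / (2 - 4 * H) := div_pos (by norm_num) (by linarith)
    have h3 : (0:ℝ) < 4 ^ (4 * H - 1) := Real.rpow_pos_of_pos (by norm_num) _
    have h4 : (0:ℝ) < 1 + 1 / (4 * H - 1) := by
      have := one_div_pos.2 (show (0:ℝ) < 4 * H - 1 by linarith); linarith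
    have hA := mul_pos h1 h2
    have hB := mul_pos (mul_pos (show (0:ℝ) < 8 by norm_num) h3) h4
    rw [hC]; linarith
  refine ⟨2 * C, by linarith, ?_⟩
  intro k hk
  have hR1 : (1:ℝ) ≤ znorm k := Stmt2.one_le_znorm hk
  have hR0 : (0:ℝ) < znorm k := lt_of_lt_of_le one_pos hR1
  set T : ℤ × ℤ → ℝ := fun h => 1 / (znorm h ^ (4 * H) * znorm (k - h) ^ (4 * H)) with hT
  have hbound : ∀ u : Finset {h : ℤ × ℤ // h ≠ 0 ∧ h ≠ k},
      ∑ x ∈ u, T x.1 ≤ 2 * C * znorm k ^ (2 - 2 * (4 * H)) := by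
    intro u
    have himg : ∑ x ∈ u, T x.1 = ∑ h ∈ u.image Subtype.val, T h := by
      rw [Finset.sum_image (fun a _ b _ hab => Subtype.ext hab)]
    rw [himg]
    set t : Finset (ℤ × ℤ) := u.image Subtype.val with htdef
    have htmem : ∀ h ∈ t, h ≠ 0 ∧ h ≠ k := by
      intro h hh
      rw [htdef, Finset.mem_image] at hh
      obtain ⟨x, _, rfl⟩ := hh
      exact x.2
    rw [← Finset.sum_filter_add_sum_filter_not t (fun h => znorm h ≤ znorm (k - h))]
    have hpart1 : ∑ h ∈ t.filter (fun h => znorm h ≤ znorm (k - h)), T h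
        ≤ C * znorm k ^ (2 - 2 * (4 * H)) := by
      apply Stmt2.key hp1 hp2 hk
      intro h hh
      rw [Finset.mem_filter] at hh
      exact ⟨(htmem h hh.1).1, (htmem h hh.1).2, hh.2⟩
    have hpart2 : ∑ h ∈ t.filter (fun h => ¬ znorm h ≤ znorm (k - h)), T h
        ≤ C * znorm k ^ (2 - 2 * (4 * H)) := by
      set t2 := t.filter (fun h => ¬ znorm h ≤ znorm (k - h)) with ht2
      have hswap : ∑ h ∈ t2, T h = ∑ g ∈ t2.image (fun h => k - h), T g := by
        rw [Finset.sum_image (fun a _ b _ hab => by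
          have : k - a = k - b := hab
          have := sub_right_injective this
          exact this)]
        apply Finset.sum_congr rfl
        intro h _
        rw [hT]
        simp only [sub_sub_cancel]
        rw [mul_comm]
      rw [hswap]
      apply Stmt2.key hp1 hp2 hk
      intro g hg
      rw [Finset.mem_image] at hg
      obtain ⟨h, hh, rfl⟩ := hg
      rw [ht2, Finset.mem_filter] at hh
      obtain ⟨hht, hlt⟩ := hh
      obtain ⟨h0, hk'⟩ := htmem h hht
      refine ⟨sub_ne_zero.2 (Ne.symm hk'), ?_, ?_⟩
      · rw [Ne, sub_eq_self]; exact h0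
      · rw [sub_sub_cancel]
        exact (lt_of_not_ge hlt).le
    calc ∑ h ∈ t.filter (fun h => znorm h ≤ znorm (k - h)), T h
          + ∑ h ∈ t.filter (fun h => ¬ znorm h ≤ znorm (k - h)), T h
        ≤ C * znorm k ^ (2 - 2 * (4 * H)) + C * znorm k ^ (2 - 2 * (4 * H)) :=
          add_le_add hpart1 hpart2
      _ = 2 * C * znorm k ^ (2 - 2 * (4 * H)) := by ring
  have hnn : ∀ x : {h : ℤ × ℤ // h ≠ 0 ∧ h ≠ k}, 0 ≤ T x.1 := by
    intro x
    rw [hT]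
    apply div_nonneg zero_le_one
    exact mul_nonneg (Real.rpow_nonneg (Stmt2.znorm_nonneg _) _)
      (Real.rpow_nonneg (Stmt2.znorm_nonneg _) _)
  have hsum : Summable (fun x : {h : ℤ × ℤ // h ≠ 0 ∧ h ≠ k} => T x.1) :=
    summable_of_sum_le hnn hbound
  have hfin : 2 * C * znorm k ^ (2 - 2 * (4 * H)) = 2 * C / znorm k ^ (8 * H - 2) := by
    rw [show (2:ℝ) - 2 * (4 * H) = -(8 * H - 2) by ring, Real.rpow_neg hR0.le,
      div_eq_mul_inv]
  calc (∑' h : {h : ℤ × ℤ // h ≠ 0 ∧ h ≠ k},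
        1 / (znorm h.1 ^ (4 * H) * znorm (k - h.1) ^ (4 * H)))
      = ∑' x : {h : ℤ × ℤ // h ≠ 0 ∧ h ≠ k}, T x.1 := by rw [hT]
    _ ≤ 2 * C * znorm k ^ (2 - 2 * (4 * H)) := Summable.tsum_le_of_sum_le hsum hbound
    _ = 2 * C / znorm k ^ (8 * H - 2) := hfin
end
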